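/- Let A be a skew brace, I an ideal, and J = [I,A]_RadRng. Then for all a ∈ I and b, d ∈ A, the following congruences hold modulo J: (b∘a - b)∘d - d ≡ b∘a∘d - b∘d, (a∘b - b)∘d - d ≡ a∘b∘d - b∘d, (b - b∘a)∘d - d ≡ b∘d - b∘a∘d, and (b - a∘b)∘d - d ≡ b∘d - a∘b∘d. -/
import Mathlib


/-- A skew brace: a type with an additive group structure and a second group
operation `circ` (with inverse `cinv` and the same identity `0`) satisfying the
skew brace compatibility law `a ∘ (b + c) = a ∘ b - a + a ∘ c`. -/
class SkewBrace (A : Type*) extends AddGroup A where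
  circ : A → A → A
  cinv : A → A
  circ_assoc : ∀ a b c : A, circ (circ a b) c = circ a (circ b c)
  zero_circ : ∀ a : A, circ 0 a = a
  circ_zero : ∀ a : A, circ a 0 = a
  cinv_circ : ∀ a : A, circ (cinv a) a = 0
  circ_cinv : ∀ a : A, circ a (cinv a) = 0
  compat : ∀ a b c : A, circ a (b + c) = circ a b - a + circ a c

namespace SkewBrace

variable {A : Type*} [SkewBrace A]

/-- The star operation `a * b = -a + a ∘ b - b`. -/
def star (a b : A) : A := -a + circ a b - b

/-- The right distributor `[a,b,c] = (a+b)∘c - b∘c + c - a∘c`. -/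
def rd (a b c : A) : A := circ (a + b) c - circ b c + c - circ a c

/-- An ideal of a skew brace: a normal additive subgroup closed under the
star operation on both sides. -/
def IsIdeal (I : AddSubgroup A) : Prop :=
  (∀ a : A, ∀ x ∈ I, a + x - a ∈ I) ∧
  (∀ a : A, ∀ x ∈ I, star a x ∈ I) ∧
  (∀ a : A, ∀ x ∈ I, star x a ∈ I)

/-- `Z_R(A)`: additively central elements annihilating all right distributors. -/
def ZR (A : Type*) [SkewBrace A] : Set A :=
  {z | (∀ a : A, z + a = a + z) ∧ ∀ b c : A, rd z b c = 0 ∧ rd b z c = 0 ∧ rd b c z = 0}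

end SkewBrace

open SkewBrace

private lemma neg_rd_mem {A : Type*} [SkewBrace A] {I : AddSubgroup A}
    {J : AddSubgroup A}
    (hJ : J = AddSubgroup.closure
      ({x : A | ∃ a b c : A, (a ∈ I ∨ b ∈ I ∨ c ∈ I) ∧ x = rd a b c} ∪
       {x : A | ∃ a ∈ I, ∃ b : A, x = a + b - a - b}))
    {x : A} (hx : x ∈ I) (y d : A) :
    SkewBrace.circ x d - d + SkewBrace.circ y d - SkewBrace.circ (x + y) d ∈ J := by
  have h : SkewBrace.circ x d - d + SkewBrace.circ y d - SkewBrace.circ (x + y) d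
      = -rd x y d := by
    simp [rd, sub_eq_add_neg, neg_add_rev, add_assoc]
  rw [h, hJ]
  exact neg_mem (AddSubgroup.subset_closure (Or.inl ⟨x, y, d, Or.inl hx, rfl⟩))

theorem stmt18 {A : Type*} [SkewBrace A] (I : AddSubgroup A) (hI : IsIdeal I)
    (J : AddSubgroup A)
    (hJ : J = AddSubgroup.closure
      ({x : A | ∃ a b c : A, (a ∈ I ∨ b ∈ I ∨ c ∈ I) ∧ x = rd a b c} ∪
       {x : A | ∃ a ∈ I, ∃ b : A, x = a + b - a - b}))
    (a : A) (ha : a ∈ I) (b d : A) :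
    (SkewBrace.circ (SkewBrace.circ b a - b) d - d) -
      (SkewBrace.circ b (SkewBrace.circ a d) - SkewBrace.circ b d) ∈ J ∧
    (SkewBrace.circ (SkewBrace.circ a b - b) d - d) -
      (SkewBrace.circ a (SkewBrace.circ b d) - SkewBrace.circ b d) ∈ J ∧
    (SkewBrace.circ (b - SkewBrace.circ b a) d - d) -
      (SkewBrace.circ b d - SkewBrace.circ b (SkewBrace.circ a d)) ∈ J ∧
    (SkewBrace.circ (b - SkewBrace.circ a b) d - d) -
      (SkewBrace.circ b d - SkewBrace.circ a (SkewBrace.circ b d)) ∈ J := by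
  -- x₁ = b∘a - b ∈ I
  have hx1 : SkewBrace.circ b a - b ∈ I := by
    have h1 : star b a + a ∈ I := add_mem (hI.2.1 b a ha) ha
    have h2 := hI.1 b _ h1
    have : b + (star b a + a) - b = SkewBrace.circ b a - b := by
      simp [SkewBrace.star, sub_eq_add_neg, add_assoc]
    rwa [this] at h2
  -- x₂ = a∘b - b ∈ I
  have hx2 : SkewBrace.circ a b - b ∈ I := by
    have h1 : a + star a b ∈ I := add_mem ha (hI.2.2 b a ha)
    have : a + star a b = SkewBrace.circ a b - b := by
      simp [SkewBrace.star, sub_eq_add_neg, add_assoc]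
    rwa [this] at h1
  have hx3 : b - SkewBrace.circ b a ∈ I := by
    have := neg_mem hx1; rwa [neg_sub] at this
  have hx4 : b - SkewBrace.circ a b ∈ I := by
    have := neg_mem hx2; rwa [neg_sub] at this
  refine ⟨?_, ?_, ?_, ?_⟩
  · have h := neg_rd_mem hJ hx1 b d
    rw [sub_add_cancel, circ_assoc] at h
    have e : (SkewBrace.circ (SkewBrace.circ b a - b) d - d) -
        (SkewBrace.circ b (SkewBrace.circ a d) - SkewBrace.circ b d)
        = SkewBrace.circ (SkewBrace.circ b a - b) d - d + SkewBrace.circ b d -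
          SkewBrace.circ b (SkewBrace.circ a d) := by
      simp [sub_eq_add_neg, neg_add_rev, add_assoc]
    rw [e]
    exact h
  · have h := neg_rd_mem hJ hx2 b d
    rw [sub_add_cancel, circ_assoc] at h
    have e : (SkewBrace.circ (SkewBrace.circ a b - b) d - d) -
        (SkewBrace.circ a (SkewBrace.circ b d) - SkewBrace.circ b d)
        = SkewBrace.circ (SkewBrace.circ a b - b) d - d + SkewBrace.circ b d -
          SkewBrace.circ a (SkewBrace.circ b d) := by
      simp [sub_eq_add_neg, neg_add_rev, add_assoc]
    rw [e]
    exact h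
  · have h := neg_rd_mem hJ hx3 (SkewBrace.circ b a) d
    rw [sub_add_cancel, circ_assoc] at h
    have e : (SkewBrace.circ (b - SkewBrace.circ b a) d - d) -
        (SkewBrace.circ b d - SkewBrace.circ b (SkewBrace.circ a d))
        = SkewBrace.circ (b - SkewBrace.circ b a) d - d +
          SkewBrace.circ b (SkewBrace.circ a d) - SkewBrace.circ b d := by
      simp [sub_eq_add_neg, neg_add_rev, add_assoc]
    rw [e]
    exact h
  · have h := neg_rd_mem hJ hx4 (SkewBrace.circ a b) d
    rw [sub_add_cancel, circ_assoc] at h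
    have e : (SkewBrace.circ (b - SkewBrace.circ a b) d - d) -
        (SkewBrace.circ b d - SkewBrace.circ a (SkewBrace.circ b d))
        = SkewBrace.circ (b - SkewBrace.circ a b) d - d +
          SkewBrace.circ a (SkewBrace.circ b d) - SkewBrace.circ b d := by
      simp [sub_eq_add_neg, neg_add_rev, add_assoc]
    rw [e]
    exact h
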